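/- Let G be a second countable locally compact group with left Haar measure, ℓ a length function on G, Γ ⊆ G a discrete subgroup, and Ω ⊆ G a Borel set such that the map Ω × Γ → G, (ω,γ) ↦ ωγ, is a bijection. For g ∈ G and ω ∈ Ω let g·ω ∈ Ω and α(g,ω) ∈ Γ be the unique elements with gω = (g·ω)·α(g,ω). Assume: (i) there is s₀ > 0 with I := ∫_Ω e^{s₀·ℓ(ω)} dω < ∞; and (ii) ℓ(ω) ≤ inf_{γ∈Γ} ℓ(ωγ) + 1 for every ω ∈ Ω. Then there is C > 0 (one may take C = e^{s₀/2}·I) such that for every s ∈ (0, s₀/2] and every g ∈ G: ∫_Ω e^{s·ℓ(α(g,ω))} dω ≤ C·e^{2s·ℓ(g)}. -/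

import Mathlib

open MeasureTheory Filter Real Topology

/-- A length function on a topological group. -/
structure IsLengthFunction {G : Type*} [Group G] [TopologicalSpace G] (ℓ : G → ℝ) : Prop where
  nonneg : ∀ g, 0 ≤ ℓ g
  bddOnCompact : ∀ Q : Set G, IsCompact Q → ∃ M : ℝ, ∀ g ∈ Q, ℓ g ≤ M
  symm : ∀ g, ℓ g⁻¹ = ℓ g
  subadd : ∀ g h, ℓ (g * h) ≤ ℓ g + ℓ h

/-- Exponential integrability of the cocycle `α(g,ω)` associated to a fundamental domain
whose elements almost minimize the length in their `Γ`-orbit. -/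
theorem cocycle_exponentially_integrable {G : Type*}
    [Group G] [TopologicalSpace G] [IsTopologicalGroup G] [LocallyCompactSpace G]
    [SecondCountableTopology G] [MeasurableSpace G] [BorelSpace G]
    (μ : Measure G) [μ.IsHaarMeasure]
    (ℓ : G → ℝ) (hℓ : IsLengthFunction ℓ)
    (Γ : Subgroup G) [DiscreteTopology ↥Γ]
    (Ω : Set G) (hΩmeas : MeasurableSet Ω)
    (hbij : ∀ g : G, ∃! p : Ω × Γ, (p.1 : G) * (p.2 : G) = g)
    (act : G → G → G) (coc : G → G → Γ)
    (hact : ∀ g : G, ∀ ω ∈ Ω, act g ω ∈ Ω)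
    (hdecomp : ∀ g : G, ∀ ω ∈ Ω, g * ω = act g ω * (coc g ω : G))
    (s₀ : ℝ) (hs₀ : 0 < s₀) (I : ℝ)
    (hI : ∫⁻ ω in Ω, ENNReal.ofReal (Real.exp (s₀ * ℓ ω)) ∂μ = ENNReal.ofReal I)
    (hmin : ∀ ω ∈ Ω, ∀ γ : Γ, ℓ ω ≤ ℓ (ω * (γ : G)) + 1) :
    ∃ C : ℝ, 0 < C ∧
      ∀ s : ℝ, 0 < s → s ≤ s₀ / 2 → ∀ g : G,
        ∫⁻ ω in Ω, ENNReal.ofReal (Real.exp (s * ℓ (coc g ω : G))) ∂μ ≤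
          ENNReal.ofReal (C * Real.exp (2 * s * ℓ g)) := by
  refine ⟨Real.exp (s₀ / 2) * max I 0 + 1, by positivity, ?_⟩
  intro s hs hss g
  have key : ∀ ω ∈ Ω, ENNReal.ofReal (Real.exp (s * ℓ (coc g ω : G))) ≤
      ENNReal.ofReal (Real.exp (2 * s * ℓ g + s)) * ENNReal.ofReal (Real.exp (s₀ * ℓ ω)) := by
    intro ω hω
    have h1 : (coc g ω : G) = (act g ω)⁻¹ * (g * ω) := by
      rw [hdecomp g ω hω, inv_mul_cancel_left]
    have hl2 : ℓ (act g ω) ≤ ℓ g + ℓ ω + 1 := by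
      have h := hmin (act g ω) (hact g ω hω) (coc g ω)
      rw [← hdecomp g ω hω] at h
      have := hℓ.subadd g ω
      linarith
    have hl1 : ℓ (coc g ω : G) ≤ 2 * ℓ g + 2 * ℓ ω + 1 := by
      rw [h1]
      have h2 := hℓ.subadd (act g ω)⁻¹ (g * ω)
      have h3 := hℓ.subadd g ω
      have h4 := hℓ.symm (act g ω)
      linarith
    have hexp : Real.exp (s * ℓ (coc g ω : G)) ≤
        Real.exp (2 * s * ℓ g + s) * Real.exp (s₀ * ℓ ω) := by
      rw [← Real.exp_add]
      apply Real.exp_le_exp.2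
      have hlω := hℓ.nonneg ω
      have hcoc : s * ℓ (coc g ω : G) ≤ s * (2 * ℓ g + 2 * ℓ ω + 1) :=
        mul_le_mul_of_nonneg_left hl1 hs.le
      nlinarith
    calc ENNReal.ofReal (Real.exp (s * ℓ (coc g ω : G)))
        ≤ ENNReal.ofReal (Real.exp (2 * s * ℓ g + s) * Real.exp (s₀ * ℓ ω)) :=
          ENNReal.ofReal_le_ofReal hexp
      _ = _ := ENNReal.ofReal_mul (Real.exp_pos _).le
  calc ∫⁻ ω in Ω, ENNReal.ofReal (Real.exp (s * ℓ (coc g ω : G))) ∂μ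
      ≤ ∫⁻ ω in Ω, ENNReal.ofReal (Real.exp (2 * s * ℓ g + s)) *
          ENNReal.ofReal (Real.exp (s₀ * ℓ ω)) ∂μ := setLIntegral_mono' hΩmeas key
    _ = ENNReal.ofReal (Real.exp (2 * s * ℓ g + s)) *
          ∫⁻ ω in Ω, ENNReal.ofReal (Real.exp (s₀ * ℓ ω)) ∂μ :=
        lintegral_const_mul' _ _ ENNReal.ofReal_ne_top
    _ = ENNReal.ofReal (Real.exp (2 * s * ℓ g + s) * I) := by
        rw [hI, ENNReal.ofReal_mul (Real.exp_pos _).le]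
    _ ≤ ENNReal.ofReal ((Real.exp (s₀ / 2) * max I 0 + 1) * Real.exp (2 * s * ℓ g)) := by
        apply ENNReal.ofReal_le_ofReal
        rw [Real.exp_add]
        have h1 : Real.exp s * I ≤ Real.exp (s₀ / 2) * max I 0 + 1 := by
          have hIm : I ≤ max I 0 := le_max_left _ _
          have hm0 : 0 ≤ max I 0 := le_max_right _ _
          have he : Real.exp s ≤ Real.exp (s₀ / 2) := Real.exp_le_exp.2 hss
          nlinarith [Real.exp_pos s]
        have h2 : 0 < Real.exp (2 * s * ℓ g) := Real.exp_pos _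
        nlinarith
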